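/- Let A, B be nonzero integers, Δ = A² − 4B, u_n, v_n the Lucas sequence and its companion, and w_n the largest divisor of u_n coprime to u_1, ..., u_{n-1}. Then for every n ≥ 5, ∑_{j=1}^{n-1} v_j/u_j ≡ ((n²−1)Δ/6)·(u_n/v_n) (mod w_n²), meaning: v_n·∏_{j=1}^{n-1} u_j is coprime to w_n, and w_n² divides the integer 6·v_n·∏_{j=1}^{n-1}u_j·∑_{j=1}^{n-1} v_j/u_j − (n²−1)Δ·u_n·∏_{j=1}^{n-1}u_j, noting also gcd(w_n, 6) = 1. -/

import Mathlib

/-- The Lucas sequence u_n for parameters (A, B). -/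
def lucasU (A B : ℤ) : ℕ → ℤ
  | 0 => 0
  | 1 => 1
  | n + 2 => A * lucasU A B (n + 1) - B * lucasU A B n

/-- The companion Lucas sequence v_n for parameters (A, B). -/
def lucasV (A B : ℤ) : ℕ → ℤ
  | 0 => 2
  | 1 => A
  | n + 2 => A * lucasV A B (n + 1) - B * lucasV A B n

/-- `w` is the largest (positive) divisor of `u_n` coprime to `u_1, …, u_{n-1}`. -/
def IsWn (A B : ℤ) (n : ℕ) (w : ℤ) : Prop :=
  0 < w ∧ w ∣ lucasU A B n ∧ (∀ k, 1 ≤ k → k < n → IsCoprime w (lucasU A B k)) ∧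
    ∀ d : ℤ, 0 < d → d ∣ lucasU A B n →
      (∀ k, 1 ≤ k → k < n → IsCoprime d (lucasU A B k)) → d ≤ w

section
variable (A B : ℤ)

local notation "u" => lucasU A B
local notation "v" => lucasV A B

lemma two_step {P : ℕ → Prop} (h0 : P 0) (h1 : P 1)
    (ih : ∀ n, P n → P (n+1) → P (n+2)) : ∀ n, P n := by
  have key : ∀ n, P n ∧ P (n+1) := by
    intro n
    induction n with
    | zero => exact ⟨h0, h1⟩
    | succ k h => exact ⟨h.2, ih k h.1 h.2⟩
  exact fun n => (key n).1

lemma urec (k : ℕ) : u (k+2) = A * u (k+1) - B * u k := rfl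
lemma vrec (k : ℕ) : v (k+2) = A * v (k+1) - B * v k := rfl

lemma u0 : u 0 = 0 := rfl
lemma u1 : u 1 = 1 := rfl
lemma u2 : u 2 = A := by rw [urec]; simp [u0, u1]
lemma v0 : v 0 = 2 := rfl
lemma v1 : v 1 = A := rfl

-- H1
lemma vu (b : ℕ) : v b = 2 * u (b+1) - A * u b := by
  induction b using two_step with
  | h0 => simp [v0, u0, u1]
  | h1 => rw [v1, u2, u1]; ring
  | ih b ih1 ih2 => rw [vrec, urec A B (b+1), ih1, ih2, urec]; ring

-- H2
lemma det (b : ℕ) : u (b+1)^2 - A * u (b+1) * u b + B * u b ^2 = B ^ b := by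
  induction b with
  | zero => simp [u0, u1]
  | succ k ih => rw [urec]; ring_nf; ring_nf at ih; linear_combination (B:ℤ) * ih

end

section
variable (A B : ℤ)
local notation "u" => lucasU A B
local notation "v" => lucasV A B
local notation "Δ" => A^2 - 4*B

-- H3
lemma vsq (b : ℕ) : v b ^ 2 - Δ * u b ^ 2 = 4 * B ^ b := by
  have h1 := vu A B b
  have h2 := det A B b
  linear_combination (2 * u (b+1) - A * u b + v b) * h1 + 4 * h2

-- H4
lemma addU (b : ℕ) : ∀ a, 2 * u (a+b) = u a * v b + v a * u b := by
  apply two_step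
  · simp [u0, v0]
  · have := vu A B b
    simp only [u1, v1, Nat.add_comm 1 b]
    linear_combination -this
  · intro a ih1 ih2
    have e1 : a + 2 + b = (a + b) + 2 := by omega
    have e2 : a + 1 + b = (a + b) + 1 := by omega
    rw [e2] at ih2
    rw [e1, urec, urec A B a, vrec A B a]
    linear_combination A * ih2 - B * ih1

-- H5
lemma addV (b : ℕ) : ∀ a, 2 * v (a+b) = v a * v b + Δ * (u a * u b) := by
  apply two_step
  · simp [u0, v0]
  · have h1 := vu A B b
    have h2 := vu A B (b+1)
    have h3 := urec A B b
    simp only [u1, v1, Nat.add_comm 1 b]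
    linear_combination 2*h2 - A*h1 + 4*h3
  · intro a ih1 ih2
    have e1 : a + 2 + b = (a + b) + 2 := by omega
    have e2 : a + 1 + b = (a + b) + 1 := by omega
    rw [e2] at ih2
    rw [e1, vrec, urec A B a, vrec A B a]
    linear_combination A * ih2 - B * ih1

-- H6
lemma subU (a b : ℕ) : u (a+b) * v b - v (a+b) * u b = 2 * B ^ b * u a := by
  have h1 := addU A B b a
  have h2 := addV A B b a
  have h3 := vsq A B b
  apply mul_left_cancel₀ (a := (2:ℤ)) two_ne_zero
  linear_combination v b * h1 - u b * h2 + u a * h3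

-- H7
lemma subV (a b : ℕ) : v (a+b) * v b - Δ * (u (a+b) * u b) = 2 * B ^ b * v a := by
  have h1 := addU A B b a
  have h2 := addV A B b a
  have h3 := vsq A B b
  apply mul_left_cancel₀ (a := (2:ℤ)) two_ne_zero
  linear_combination v b * h2 - Δ * u b * h1 + v a * h3

lemma u3 : u 3 = A^2 - B := by rw [urec, u2, u1]; ring
lemma u4 : u 4 = A^3 - 2*A*B := by rw [urec, u3, u2]; ring

-- mod B style
lemma upow (k : ℕ) : ∃ c, u (k+1) = A ^ k + B * c := by
  induction k with
  | zero => exact ⟨0, by simp [u1]⟩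
  | succ k ih =>
    obtain ⟨c, hc⟩ := ih
    exact ⟨A * c - u k, by rw [urec, hc]; ring⟩

-- cast to a ring where B = 0
lemma ucast_of_B_eq_zero {R : Type*} [CommRing R] (hB : ((B:ℤ):R) = 0) (k : ℕ) :
    ((u (k+1) : ℤ) : R) = ((A:ℤ):R) ^ k := by
  induction k with
  | zero => simp [u1]
  | succ k ih => rw [urec]; push_cast; rw [hB, ih]; ring
end

section
variable (A B : ℤ)
local notation "u" => lucasU A B
local notation "v" => lucasV A B

lemma not_dvd_of_coprime {w x p : ℤ} (h : IsCoprime w x) (hp : p ∣ w) (hdvd : p ∣ x)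
    (hunit : ¬ IsUnit p) : False :=
  hunit ((h.of_isCoprime_of_dvd_left hp).isUnit_of_dvd' dvd_rfl hdvd)

lemma int_two_not_unit : ¬ IsUnit (2:ℤ) := by
  intro h; rcases Int.isUnit_iff.mp h with h | h <;> omega

lemma int_three_not_unit : ¬ IsUnit (3:ℤ) := by
  intro h; rcases Int.isUnit_iff.mp h with h | h <;> omega

lemma cop_two (n : ℕ) (hn : 5 ≤ n) (w : ℤ) (hdvd : w ∣ u n)
    (hc2 : IsCoprime w (u 2)) (hc3 : IsCoprime w (u 3)) : IsCoprime w 2 := by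
  have h2w : ¬ (2:ℤ) ∣ w := by
    intro h2w
    have hA : ¬ (2:ℤ) ∣ A := fun hA =>
      not_dvd_of_coprime hc2 h2w (by rw [u2]; exact hA) int_two_not_unit
    have hu3 : ¬ (2:ℤ) ∣ (A^2 - B) := fun h3 =>
      not_dvd_of_coprime hc3 h2w (by rw [u3]; exact h3) int_two_not_unit
    have ha : ((A:ℤ) : ZMod 2) ≠ 0 := fun h =>
      hA ((ZMod.intCast_zmod_eq_zero_iff_dvd A 2).mp h)
    have hab : ((A:ℤ) : ZMod 2)^2 - ((B:ℤ) : ZMod 2) ≠ 0 := fun h => by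
      apply hu3
      have h' : (((A^2 - B : ℤ)) : ZMod 2) = 0 := by push_cast; exact h
      exact_mod_cast (ZMod.intCast_zmod_eq_zero_iff_dvd _ 2).mp h'
    by_cases hb : ((B:ℤ) : ZMod 2) = 0
    · have hun : ((u n : ℤ) : ZMod 2) = 0 := by
        rw [ZMod.intCast_zmod_eq_zero_iff_dvd]; exact h2w.trans hdvd
      rw [show n = (n-1)+1 by omega, ucast_of_B_eq_zero A B hb] at hun
      exact ha (pow_eq_zero_iff (by omega) |>.mp hun)
    · revert ha hb hab
      generalize ((A:ℤ) : ZMod 2) = a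
      generalize ((B:ℤ) : ZMod 2) = b
      revert a b; decide
  have : w % 2 = 1 ∨ w % 2 = -1 := by omega
  rcases this with h | h
  · exact ⟨1, -((w-1)/2), by omega⟩
  · exact ⟨-1, (w+1)/2, by omega⟩

lemma cop_three (n : ℕ) (hn : 5 ≤ n) (w : ℤ) (hdvd : w ∣ u n)
    (hc2 : IsCoprime w (u 2)) (hc3 : IsCoprime w (u 3)) (hc4 : IsCoprime w (u 4)) :
    IsCoprime w 3 := by
  have h3w : ¬ (3:ℤ) ∣ w := by
    intro h3w
    have hA : ¬ (3:ℤ) ∣ A := fun hA =>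
      not_dvd_of_coprime hc2 h3w (by rw [u2]; exact hA) int_three_not_unit
    have hu3 : ¬ (3:ℤ) ∣ (A^2 - B) := fun h3 =>
      not_dvd_of_coprime hc3 h3w (by rw [u3]; exact h3) int_three_not_unit
    have hu4 : ¬ (3:ℤ) ∣ (A^3 - 2*A*B) := fun h4 =>
      not_dvd_of_coprime hc4 h3w (by rw [u4]; exact h4) int_three_not_unit
    have ha : ((A:ℤ) : ZMod 3) ≠ 0 := fun h =>
      hA ((ZMod.intCast_zmod_eq_zero_iff_dvd A 3).mp h)
    have hab : ((A:ℤ) : ZMod 3)^2 - ((B:ℤ) : ZMod 3) ≠ 0 := fun h => by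
      apply hu3
      have h' : (((A^2 - B : ℤ)) : ZMod 3) = 0 := by push_cast; exact h
      exact_mod_cast (ZMod.intCast_zmod_eq_zero_iff_dvd _ 3).mp h'
    have hab2 : ((A:ℤ) : ZMod 3)^3 - 2*((A:ℤ) : ZMod 3)*((B:ℤ) : ZMod 3) ≠ 0 := fun h => by
      apply hu4
      have h' : (((A^3 - 2*A*B : ℤ)) : ZMod 3) = 0 := by push_cast; exact h
      exact_mod_cast (ZMod.intCast_zmod_eq_zero_iff_dvd _ 3).mp h'
    by_cases hb : ((B:ℤ) : ZMod 3) = 0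
    · have hun : ((u n : ℤ) : ZMod 3) = 0 := by
        rw [ZMod.intCast_zmod_eq_zero_iff_dvd]; exact h3w.trans hdvd
      rw [show n = (n-1)+1 by omega, ucast_of_B_eq_zero A B hb] at hun
      exact ha (pow_eq_zero_iff (by omega) |>.mp hun)
    · revert ha hb hab hab2
      generalize ((A:ℤ) : ZMod 3) = a
      generalize ((B:ℤ) : ZMod 3) = b
      revert a b; decide
  have : w % 3 = 1 ∨ w % 3 = -1 ∨ w % 3 = 2 ∨ w % 3 = -2 := by omega
  rcases this with h | h | h | h
  · exact ⟨1, -((w-1)/3), by omega⟩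
  · exact ⟨-1, (w+1)/3, by omega⟩
  · exact ⟨-1, (w+1)/3, by omega⟩
  · exact ⟨2, -((2*w-1)/3), by omega⟩

end

section
variable (A B : ℤ)
local notation "u" => lucasU A B
local notation "v" => lucasV A B

lemma reflect_sum {M : Type*} [AddCommMonoid M] (n : ℕ) (hn : 5 ≤ n) (f : ℕ → M) :
    ∑ j ∈ Finset.Icc 1 (n-1), f j = ∑ j ∈ Finset.Icc 1 (n-1), f (n-j) := by
  apply Finset.sum_nbij' (i := fun j => n - j) (j := fun j => n - j) <;>
    intro a ha <;> simp only [Finset.mem_Icc] at *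
  · omega
  · omega
  · omega
  · omega
  · congr 1; omega

lemma partI (n : ℕ) (hn : 5 ≤ n)
    (hnz : ∀ j ∈ Finset.Icc 1 (n-1), u j ≠ 0) :
    (∑ j ∈ Finset.Icc 1 (n-1), v j * ∏ k ∈ (Finset.Icc 1 (n-1)).erase j, u k)
        * ∏ j ∈ Finset.Icc 1 (n-1), u j
      = u n * ∑ j ∈ Finset.Icc 1 (n-1),
          (∏ k ∈ (Finset.Icc 1 (n-1)).erase j, u k)
            * ∏ k ∈ (Finset.Icc 1 (n-1)).erase (n-j), u k := by
  set I := Finset.Icc 1 (n-1) with hI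
  -- rational versions
  set uq : ℕ → ℚ := fun j => ((u j : ℤ) : ℚ) with huq
  set vq : ℕ → ℚ := fun j => ((v j : ℤ) : ℚ) with hvq
  have hqnz : ∀ j ∈ I, uq j ≠ 0 := fun j hj => by
    simp only [huq, ne_eq, Int.cast_eq_zero]; exact hnz j hj
  have hmem : ∀ j ∈ I, n - j ∈ I := fun j hj => by
    simp only [hI, Finset.mem_Icc] at *; omega
  set P : ℚ := ∏ j ∈ I, uq j with hP
  have hPnz : P ≠ 0 := Finset.prod_ne_zero_iff.mpr hqnz
  have herase : ∀ j ∈ I, (∏ k ∈ I.erase j, uq k) = P / uq j := fun j hj => by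
    rw [eq_div_iff (hqnz j hj), hP]; exact Finset.prod_erase_mul I uq hj
  set s : ℚ := ∑ j ∈ I, vq j / uq j with hs
  set t : ℚ := ∑ j ∈ I, 1 / (uq j * uq (n-j)) with ht
  -- key identity s = uq n * t
  have hkey : s = uq n * t := by
    have h2 : 2 * s = 2 * (uq n * t) := by
      calc 2 * s = s + s := by ring
      _ = s + ∑ j ∈ I, vq (n-j) / uq (n-j) := by
            rw [hs]; congr 1; exact reflect_sum n hn _
      _ = ∑ j ∈ I, (vq j / uq j + vq (n-j) / uq (n-j)) := by
            rw [hs, ← Finset.sum_add_distrib]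
      _ = ∑ j ∈ I, 2 * uq n * (1 / (uq j * uq (n-j))) := by
            apply Finset.sum_congr rfl
            intro j hj
            have h1 := hqnz j hj
            have h2 := hqnz _ (hmem j hj)
            have hadd := addU A B (n-j) j
            rw [show j + (n-j) = n by simp only [hI, Finset.mem_Icc] at hj; omega] at hadd
            have hadd' : 2 * uq n = uq j * vq (n-j) + vq j * uq (n-j) := by
              simp only [huq, hvq]; exact_mod_cast hadd
            field_simp
            linear_combination -hadd'
      _ = 2 * (uq n * t) := by
            rw [ht, Finset.mul_sum, Finset.mul_sum]
            apply Finset.sum_congr rfl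
            intro j hj
            ring
    linarith
  -- now convert the main goal
  have main : (∑ j ∈ I, vq j * ∏ k ∈ I.erase j, uq k) * P
      = uq n * ∑ j ∈ I, (∏ k ∈ I.erase j, uq k) * ∏ k ∈ I.erase (n-j), uq k := by
    have e1 : ∑ j ∈ I, vq j * ∏ k ∈ I.erase j, uq k = s * P := by
      rw [hs, Finset.sum_mul]
      apply Finset.sum_congr rfl
      intro j hj
      rw [herase j hj]
      field_simp
    have e2 : ∑ j ∈ I, (∏ k ∈ I.erase j, uq k) * ∏ k ∈ I.erase (n-j), uq k
        = t * P^2 := by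
      rw [ht, Finset.sum_mul]
      apply Finset.sum_congr rfl
      intro j hj
      rw [herase j hj, herase _ (hmem j hj)]
      field_simp
    rw [e1, e2, hkey]
    ring
  simp only [huq, hvq, hP] at main
  exact_mod_cast main
end

section
variable (A B : ℤ)
local notation "u" => lucasU A B
local notation "v" => lucasV A B

set_option maxHeartbeats 2000000 in
lemma partII {R : Type*} [CommRing R] (n : ℕ) (hn : 5 ≤ n)
    (hu0 : ((u n : ℤ) : R) = 0)
    (hUnit : ∀ j ∈ Finset.Icc 1 (n-1), IsUnit ((u j : ℤ) : R))
    (h2 : IsUnit (2 : R)) (hVn : IsUnit ((v n : ℤ) : R)) :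
    6 * ((v n : ℤ) : R) *
        (∑ j ∈ Finset.Icc 1 (n-1), (∏ k ∈ (Finset.Icc 1 (n-1)).erase j, ((u k : ℤ) : R)) *
          ∏ k ∈ (Finset.Icc 1 (n-1)).erase (n-j), ((u k : ℤ) : R))
      = ((n : R)^2 - 1) * (((A : ℤ) : R)^2 - 4 * ((B : ℤ) : R)) *
          (∏ j ∈ Finset.Icc 1 (n-1), ((u j : ℤ) : R))^2 := by
  set I := Finset.Icc 1 (n-1) with hI
  set Uc : ℕ → R := fun k => ((u k : ℤ) : R) with hUcd
  set Vc : ℕ → R := fun k => ((v k : ℤ) : R) with hVcd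
  set Ac : R := ((A : ℤ) : R) with hAcd
  set Bc : R := ((B : ℤ) : R) with hBcd
  set Dc : R := Ac^2 - 4*Bc with hDcd
  set x : ℕ → R := fun k => Ring.inverse (Uc k) with hxd
  set xv : R := Ring.inverse (Vc n) with hxvd
  have hu0' : Uc n = 0 := hu0
  have hx : ∀ j ∈ I, Uc j * x j = 1 := fun j hj => Ring.mul_inverse_cancel _ (hUnit j hj)
  have hxv : Vc n * xv = 1 := Ring.mul_inverse_cancel _ hVn
  have hmem : ∀ j ∈ I, n - j ∈ I := fun j hj => by
    simp only [hI, Finset.mem_Icc] at *; omega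
  have cSubU : ∀ a b : ℕ, Uc (a+b) * Vc b - Vc (a+b) * Uc b = 2 * Bc^b * Uc a := by
    intro a b
    have h := congrArg (fun z : ℤ => (z : R)) (subU A B a b)
    push_cast at h
    exact h
  have cSubV : ∀ a b : ℕ, Vc (a+b) * Vc b - Dc * (Uc (a+b) * Uc b) = 2 * Bc^b * Vc a := by
    intro a b
    have h := congrArg (fun z : ℤ => (z : R)) (subV A B a b)
    push_cast at h
    exact h
  have cVsq : ∀ b : ℕ, Vc b^2 - Dc * Uc b^2 = 4 * Bc^b := by
    intro b
    have h := congrArg (fun z : ℤ => (z : R)) (vsq A B b)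
    push_cast at h
    exact h
  have m2 : ∀ j ∈ I, 2 * Bc^j * Uc (n-j) = -(Vc n * Uc j) := by
    intro j hj
    have e : (n-j) + j = n := by simp only [hI, Finset.mem_Icc] at hj; omega
    have h := cSubU (n-j) j
    rw [e, hu0'] at h
    linear_combination -h
  have m3 : ∀ j ∈ I, 2 * Bc^j * Vc (n-j) = Vc n * Vc j := by
    intro j hj
    have e : (n-j) + j = n := by simp only [hI, Finset.mem_Icc] at hj; omega
    have h := cSubV (n-j) j
    rw [e, hu0'] at h
    linear_combination -h
  have hinvu : ∀ y c c' : R, y * c = 1 → y * c' = 1 → c = c' := by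
    intro y c c' h1 h2'
    calc c = c * (y * c') := by rw [h2', mul_one]
    _ = c' * (y * c) := by ring
    _ = c' := by rw [h1, mul_one]
  have hxnj : ∀ j ∈ I, x (n-j) = -(2 * Bc^j) * (xv * x j) := by
    intro j hj
    apply hinvu (Uc (n-j))
    · exact hx _ (hmem j hj)
    · have hm := m2 j hj
      linear_combination (-(xv * x j)) * hm + (Uc j * x j) * hxv + hx j hj
  set r : ℕ → R := fun k => Vc k * x k with hrd
  have hr_eq : ∀ k, r k = Vc k * x k := fun _ => rfl
  have m4 : ∀ j ∈ I, r (n-j) = -(r j) := by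
    intro j hj
    rw [hr_eq, hr_eq, hxnj j hj]
    have hm := m3 j hj
    linear_combination (-(xv * x j)) * hm + (-(Vc j * x j)) * hxv
  set Q : R := ∑ j ∈ I, r j with hQd
  have hQ : Q = 0 := by
    have h1 : Q = -Q := by
      calc Q = ∑ j ∈ I, r (n-j) := by rw [hQd, hI]; exact reflect_sum n hn r
      _ = ∑ j ∈ I, -(r j) := Finset.sum_congr rfl (fun j hj => m4 j hj)
      _ = -Q := by rw [hQd, Finset.sum_neg_distrib]
    have h2' : (2:R) * Q = 2 * 0 := by rw [mul_zero]; linear_combination h1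
    exact h2.mul_left_cancel h2'
  have m6 : ∀ i ∈ I, ∀ j ∈ I, j < i → r i * r j = Dc + (r j - r i) * r (i-j) := by
    intro i hi j hj hji
    have hij : i - j ∈ I := by simp only [hI, Finset.mem_Icc] at *; omega
    have e : (i-j) + j = i := by omega
    have h1 := cSubU (i-j) j
    have h2' := cSubV (i-j) j
    rw [e] at h1 h2'
    have hxi := hx i hi
    have hxj := hx j hj
    have hxij := hx _ hij
    have hc : IsUnit (Uc i * Uc j * Uc (i-j)) :=
      ((hUnit i hi).mul (hUnit j hj)).mul (hUnit _ hij)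
    apply hc.mul_left_cancel
    simp only [hr_eq]
    linear_combination (Uc (i-j)) * h2'
      - (Vc (i-j) * Uc (i-j) * x (i-j)) * h1
      + (Uc (i-j) * Vc i * Vc j * Uc j * x j
          + Vc (i-j) * Uc (i-j) * x (i-j) * Vc i * Uc j) * hxi
      + (Uc (i-j) * Vc i * Vc j
          - Vc (i-j) * Uc (i-j) * x (i-j) * Uc i * Vc j) * hxj
      + (-(2 * Bc^j * Uc (i-j) * Vc (i-j))) * hxij
  -- prefix sums
  set Sp : ℕ → R := fun d => ∑ j ∈ Finset.Icc 1 d, r j with hSpd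
  have hSp_eq : ∀ m : ℕ, Sp m = ∑ j ∈ Finset.Icc 1 m, r j := fun _ => rfl
  have hQ_eq : Q = ∑ j ∈ I, r j := rfl
  have hSQ : Sp (n-1) = 0 := by
    rw [hSp_eq]
    rw [hQ_eq, hI] at hQ
    exact hQ
  set S2 : R := ∑ j ∈ I, r j * r j with hS2d
  set F : R := ∑ i ∈ I, r i * Sp i with hFd
  have icc1 : ∀ a : ℕ, Finset.Icc 1 a = Finset.Ioc 0 a := fun a => Finset.Icc_add_one_left_eq_Ioc 0 a
  have hFF : 2 * F = S2 := by
    have e2 : F = ∑ b ∈ I, ∑ a ∈ Finset.Icc b (n-1), r a * r b := by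
      have e1 : F = ∑ a ∈ I, ∑ b ∈ Finset.Icc 1 a, r a * r b := by
        rw [hFd]
        exact Finset.sum_congr rfl fun a _ => by rw [hSp_eq, Finset.mul_sum]
      rw [e1]
      apply Finset.sum_comm'
      intro a b
      simp only [hI, Finset.mem_Icc]
      omega
    calc 2 * F = F + F := by ring
    _ = (∑ a ∈ I, r a * Sp a) + ∑ a ∈ I, ∑ b ∈ Finset.Icc a (n-1), r b * r a := by
          rw [← e2, hFd]
    _ = ∑ a ∈ I, (r a * Sp a + ∑ b ∈ Finset.Icc a (n-1), r b * r a) := by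
          rw [← Finset.sum_add_distrib]
    _ = ∑ a ∈ I, (r a * r a + r a * Q) := by
          apply Finset.sum_congr rfl
          intro a ha
          have haI : 1 ≤ a ∧ a ≤ n-1 := by simpa [hI, Finset.mem_Icc] using ha
          rw [Finset.Icc_eq_cons_Ioc haI.2, Finset.sum_cons]
          rw [hSp_eq, hQ_eq, hI, Finset.mul_sum, Finset.mul_sum]
          have hsplit : (∑ b ∈ Finset.Icc 1 a, r a * r b)
              + ∑ b ∈ Finset.Ioc a (n-1), r a * r b
              = ∑ b ∈ Finset.Icc 1 (n-1), r a * r b := by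
            rw [icc1 a, icc1 (n-1)]
            exact Finset.sum_Ioc_consecutive _ (by omega) (by omega)
          have hcomm : ∑ b ∈ Finset.Ioc a (n-1), r b * r a
              = ∑ b ∈ Finset.Ioc a (n-1), r a * r b :=
            Finset.sum_congr rfl fun b _ => by ring
          rw [hcomm]
          linear_combination hsplit
    _ = S2 := by
          rw [hS2d]
          apply Finset.sum_congr rfl
          intro a ha
          rw [hQ]
          ring
  set G2 : R := ∑ i ∈ I, ∑ j ∈ Finset.Icc 1 (i-1), r i * r j with hG2d
  have hFG : F = G2 + S2 := by
    rw [hFd, hG2d, hS2d, ← Finset.sum_add_distrib]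
    apply Finset.sum_congr rfl
    intro i hi
    have hiI : 1 ≤ i ∧ i ≤ n-1 := by simpa [hI, Finset.mem_Icc] using hi
    have hstep : r i * Sp i = (∑ j ∈ Finset.Icc 1 (i-1), r i * r j) + r i * r i := by
      have h1 : r i * Sp i = ∑ j ∈ Finset.Icc 1 ((i-1)+1), r i * r j := by
        rw [hSp_eq, Finset.mul_sum, show (i-1)+1 = i by omega]
      rw [h1, Finset.sum_Icc_succ_top (by omega), show (i-1)+1 = i by omega]
    rw [hstep]
  set Nc : R := ∑ i ∈ I, ((i-1 : ℕ) : R) with hNcd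
  have hG2' : G2 = Nc * Dc
      + ∑ i ∈ I, ∑ j ∈ Finset.Icc 1 (i-1), (r j - r i) * r (i-j) := by
    rw [hG2d, hNcd, Finset.sum_mul, ← Finset.sum_add_distrib]
    apply Finset.sum_congr rfl
    intro i hi
    have hiI : 1 ≤ i ∧ i ≤ n-1 := by simpa [hI, Finset.mem_Icc] using hi
    have hterm : ∑ j ∈ Finset.Icc 1 (i-1), r i * r j
        = ∑ j ∈ Finset.Icc 1 (i-1), (Dc + (r j - r i) * r (i-j)) := by
      apply Finset.sum_congr rfl
      intro j hj
      have hjle : 1 ≤ j ∧ j ≤ i-1 := by simpa [Finset.mem_Icc] using hj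
      exact m6 i hi j (by simp only [hI, Finset.mem_Icc]; omega) (by omega)
    rw [hterm, Finset.sum_add_distrib, Finset.sum_const, Nat.card_Icc, nsmul_eq_mul]
    rw [show i - 1 + 1 - 1 = i - 1 by omega]
  have hD : ∑ i ∈ I, ∑ j ∈ Finset.Icc 1 (i-1), (r j - r i) * r (i-j)
      = ∑ d ∈ Finset.Icc 1 (n-2), ∑ j ∈ Finset.Icc 1 (n-1-d), (r j - r (j+d)) * r d := by
    rw [← Finset.sum_sigma I (fun i => Finset.Icc 1 (i-1)) (fun p => (r p.2 - r p.1) * r (p.1 - p.2)),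
      ← Finset.sum_sigma (Finset.Icc 1 (n-2)) (fun d => Finset.Icc 1 (n-1-d))
        (fun p => (r p.2 - r (p.2 + p.1)) * r p.1)]
    apply Finset.sum_nbij' (i := fun p => ⟨p.1 - p.2, p.2⟩) (j := fun p => ⟨p.2 + p.1, p.2⟩)
    · intro a ha
      simp only [hI, Finset.mem_sigma, Finset.mem_Icc] at *
      omega
    · intro a ha
      simp only [hI, Finset.mem_sigma, Finset.mem_Icc] at *
      omega
    · intro a ha
      simp only [hI, Finset.mem_sigma, Finset.mem_Icc] at ha
      have e1 : a.2 + (a.1 - a.2) = a.1 := by omega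
      exact Sigma.ext (by simpa using e1) (by simp)
    · intro a ha
      simp only [hI, Finset.mem_sigma, Finset.mem_Icc] at ha
      have e1 : a.2 + a.1 - a.2 = a.1 := by omega
      exact Sigma.ext (by simpa using e1) (by simp)
    · intro a ha
      simp only [hI, Finset.mem_sigma, Finset.mem_Icc] at ha
      have e1 : a.2 + (a.1 - a.2) = a.1 := by omega
      rw [e1]
  have hInner : ∀ d, 1 ≤ d → d ≤ n-2 →
      ∑ j ∈ Finset.Icc 1 (n-1-d), (r j - r (j+d)) = 2 * Sp d := by
    intro d hd1 hd2
    have hShift : ∑ j ∈ Finset.Icc 1 (n-1-d), r (j+d) = ∑ k ∈ Finset.Icc (d+1) (n-1), r k := by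
      apply Finset.sum_nbij' (i := fun j => j + d) (j := fun k => k - d)
      all_goals intro a ha
      all_goals simp only [Finset.mem_Icc] at *
      all_goals first | omega | (congr 1; omega)
    have hSplit : Sp d + ∑ k ∈ Finset.Icc (d+1) (n-1), r k = ∑ j ∈ I, r j := by
      rw [hSp_eq, hI, icc1 d, icc1 (n-1), Finset.Icc_add_one_left_eq_Ioc]
      exact Finset.sum_Ioc_consecutive _ (by omega) (by omega)
    rw [← hQ_eq, hQ] at hSplit
    have hRefl : (∑ j ∈ Finset.Icc 1 (n-1-d), r j) = Sp d := by
      have c1 : ∑ j ∈ Finset.Icc 1 (n-1-d), r j = ∑ k ∈ Finset.Icc (d+1) (n-1), r (n-k) := by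
        apply Finset.sum_nbij' (i := fun j => n - j) (j := fun k => n - k)
        all_goals intro a ha
        all_goals simp only [Finset.mem_Icc] at *
        all_goals first | omega | (congr 1; omega)
      have c2 : ∑ k ∈ Finset.Icc (d+1) (n-1), r (n-k)
          = ∑ k ∈ Finset.Icc (d+1) (n-1), -(r k) := by
        apply Finset.sum_congr rfl
        intro k hk
        simp only [Finset.mem_Icc] at hk
        exact m4 k (by simp only [hI, Finset.mem_Icc]; omega)
      rw [c1, c2, Finset.sum_neg_distrib]
      linear_combination -hSplit
    rw [Finset.sum_sub_distrib, hShift, hRefl]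
    linear_combination -hSplit
  have hD2 : ∑ d ∈ Finset.Icc 1 (n-2), ∑ j ∈ Finset.Icc 1 (n-1-d), (r j - r (j+d)) * r d
      = 2 * F := by
    have step1 : ∑ d ∈ Finset.Icc 1 (n-2), ∑ j ∈ Finset.Icc 1 (n-1-d), (r j - r (j+d)) * r d
        = ∑ d ∈ Finset.Icc 1 (n-2), 2 * (r d * Sp d) := by
      apply Finset.sum_congr rfl
      intro d hd
      simp only [Finset.mem_Icc] at hd
      rw [← Finset.sum_mul, hInner d hd.1 hd.2]
      ring
    have step2 : F = (∑ d ∈ Finset.Icc 1 (n-2), r d * Sp d) + r (n-1) * Sp (n-1) := by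
      rw [hFd, hI, show n-1 = (n-2)+1 by omega, Finset.sum_Icc_succ_top (by omega)]
    rw [step1, step2, hSQ, ← Finset.mul_sum]
    ring
  have hNc2 : 2 * Nc = ((n:R)-1) * ((n:R)-2) := by
    have hnat : 2 * (∑ i ∈ Finset.Icc 1 (n-1), (i-1)) = (n-1) * (n-2) := by
      have hre : ∑ i ∈ Finset.Icc 1 (n-1), (i-1) = ∑ k ∈ Finset.range (n-1), k := by
        apply Finset.sum_nbij' (i := fun i => i - 1) (j := fun k => k + 1)
        all_goals intro a ha
        all_goals simp only [Finset.mem_Icc, Finset.mem_range] at *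
        all_goals first | rfl | omega
      rw [hre, mul_comm, Finset.sum_range_id_mul_two]
      congr 1 <;> omega
    have hcast := congrArg (fun m : ℕ => (m : R)) hnat
    push_cast at hcast
    rw [Nat.cast_sub (by omega : 1 ≤ n), Nat.cast_sub (by omega : 2 ≤ n)] at hcast
    rw [hNcd]
    push_cast at hcast ⊢
    linear_combination hcast
  have h3S2 : 3 * S2 = -(((n:R)-1) * ((n:R)-2) * Dc) := by
    have hDfinal : (∑ i ∈ I, ∑ j ∈ Finset.Icc 1 (i-1), (r j - r i) * r (i-j)) = 2 * F := by
      rw [hD, hD2]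
    linear_combination (-1 : R) * hFF + (-2 : R) * hFG + (-2 : R) * hG2'
      + (-2 : R) * hDfinal + (-(Dc)) * hNc2
  have m5 : ∀ j ∈ I, 4 * (Bc^j * (x j)^2) = r j * r j - Dc := by
    intro j hj
    simp only [hr_eq]
    linear_combination (-((x j)^2)) * (cVsq j) + (-(Dc * (Uc j * x j + 1))) * (hx j hj)
  set W : R := ∑ j ∈ I, Bc^j * (x j)^2 with hWd
  have hW : 4 * W = S2 - ((n:R)-1) * Dc := by
    have hcard : (I.card : R) = (n:R) - 1 := by
      rw [hI, Nat.card_Icc, show n-1+1-1 = n-1 by omega, Nat.cast_sub (by omega : 1 ≤ n)]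
      push_cast
      ring
    calc 4 * W = ∑ j ∈ I, 4 * (Bc^j * (x j)^2) := by rw [hWd, Finset.mul_sum]
    _ = ∑ j ∈ I, (r j * r j - Dc) := Finset.sum_congr rfl fun j hj => m5 j hj
    _ = S2 - (I.card : R) * Dc := by
          rw [hS2d, Finset.sum_sub_distrib, Finset.sum_const, nsmul_eq_mul]
    _ = S2 - ((n:R)-1) * Dc := by rw [hcard]
  set Pc : R := ∏ j ∈ I, Uc j with hPcd
  have hPi : ∀ j ∈ I, (∏ k ∈ I.erase j, Uc k) = x j * Pc := by
    intro j hj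
    have hme := Finset.mul_prod_erase I Uc hj
    calc (∏ k ∈ I.erase j, Uc k) = (Uc j * x j) * ∏ k ∈ I.erase j, Uc k := by
          rw [hx j hj, one_mul]
    _ = x j * (Uc j * ∏ k ∈ I.erase j, Uc k) := by ring
    _ = x j * Pc := by rw [hme, hPcd]
  have hT : (∑ j ∈ I, (∏ k ∈ I.erase j, Uc k) * ∏ k ∈ I.erase (n-j), Uc k)
      = (-2 * xv * Pc^2) * W := by
    rw [hWd, Finset.mul_sum]
    apply Finset.sum_congr rfl
    intro j hj
    rw [hPi j hj, hPi _ (hmem j hj), hxnj j hj]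
    ring
  have final : 6 * Vc n * (∑ j ∈ I, (∏ k ∈ I.erase j, Uc k) * ∏ k ∈ I.erase (n-j), Uc k)
      = ((n:R)^2 - 1) * Dc * Pc^2 := by
    rw [hT]
    linear_combination (-12*Pc^2*W) * hxv + (-3*Pc^2) * hW + (-(Pc^2)) * h3S2
  exact final
end


theorem main_congruence (A B : ℤ) (hA : A ≠ 0) (hB : B ≠ 0) (n : ℕ) (hn : 5 ≤ n)
    (w : ℤ) (hw : IsWn A B n w) :
    IsCoprime w (lucasV A B n * ∏ j ∈ Finset.Icc 1 (n - 1), lucasU A B j) ∧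
    IsCoprime w (6 : ℤ) ∧
    w ^ 2 ∣
      6 * lucasV A B n *
          (∑ j ∈ Finset.Icc 1 (n - 1),
            lucasV A B j * ∏ k ∈ (Finset.Icc 1 (n - 1)).erase j, lucasU A B k)
        - ((n : ℤ) ^ 2 - 1) * (A ^ 2 - 4 * B) * lucasU A B n *
            ∏ j ∈ Finset.Icc 1 (n - 1), lucasU A B j := by
  obtain ⟨hwpos, hwdvd, hcop, hmax⟩ := hw
  by_cases hzero : ∃ j ∈ Finset.Icc 1 (n-1), lucasU A B j = 0
  · obtain ⟨j, hj, hj0⟩ := hzero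
    simp only [Finset.mem_Icc] at hj
    have hcj : IsCoprime w (lucasU A B j) := hcop j (by omega) (by omega)
    rw [hj0] at hcj
    have hu : IsUnit w := isCoprime_zero_right.mp hcj
    have hw1 : w = 1 := by rcases Int.isUnit_iff.mp hu with h|h <;> omega
    rw [hw1]
    exact ⟨isCoprime_one_left, isCoprime_one_left, by rw [one_pow]; exact one_dvd _⟩
  · push_neg at hzero
    have hc2' : IsCoprime w (lucasU A B 2) := hcop 2 (by omega) (by omega)
    have hc3' : IsCoprime w (lucasU A B 3) := hcop 3 (by omega) (by omega)
    have hc4' : IsCoprime w (lucasU A B 4) := hcop 4 (by omega) (by omega)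
    have c2 : IsCoprime w 2 := cop_two A B n hn w hwdvd hc2' hc3'
    have c3 : IsCoprime w 3 := cop_three A B n hn w hwdvd hc2' hc3' hc4'
    have cA : IsCoprime w A := by rwa [u2] at hc2'
    have cB : IsCoprime w B := by
      obtain ⟨c, hc⟩ := upow A B (n-1)
      rw [show n-1+1 = n by omega] at hc
      have cApow : IsCoprime w (A^(n-1)) := cA.pow_right
      obtain ⟨s, hs⟩ := hwdvd
      obtain ⟨xx, yy, hxy⟩ := cApow
      exact ⟨xx + yy*s, -(yy*c), by linear_combination hxy + yy*hc - yy*hs⟩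
    have c6 : IsCoprime w 6 := by
      have h23 := c2.mul_right c3
      norm_num at h23
      exact h23
    have cvn : IsCoprime w (lucasV A B n) := by
      have h5 := vsq A B n
      obtain ⟨s, hs⟩ := hwdvd
      have c4B : IsCoprime w (4 * B^n) := by
        have c4 : IsCoprime w 4 := by
          have h22 := c2.mul_right c2
          norm_num at h22
          exact h22
        exact c4.mul_right cB.pow_right
      have key : lucasV A B n * lucasV A B n
          = 4*B^n + w * ((A^2-4*B) * s * s * w) := by
        linear_combination h5 + (A^2-4*B)*(lucasU A B n + w*s)*hs
      have hsq : IsCoprime w (lucasV A B n * lucasV A B n) := by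
        rw [key]
        exact c4B.add_mul_left_right _
      exact hsq.of_mul_right_left
    have cP : IsCoprime w (∏ j ∈ Finset.Icc 1 (n-1), lucasU A B j) :=
      IsCoprime.prod_right (fun j hj => by
        simp only [Finset.mem_Icc] at hj
        exact hcop j (by omega) (by omega))
    refine ⟨cvn.mul_right cP, c6, ?_⟩
    have hIdent := partI A B n hn hzero
    -- mod w^2 via ZMod
    set m := w.natAbs with hm
    have hwm : ((w : ℤ) : ZMod m) = 0 := by
      rw [ZMod.intCast_zmod_eq_zero_iff_dvd]
      exact Int.natAbs_dvd.mpr dvd_rfl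
    have unit_of_cop : ∀ z : ℤ, IsCoprime w z → IsUnit ((z : ℤ) : ZMod m) := by
      intro z hz
      obtain ⟨a, b, hab⟩ := hz
      have hcast := congrArg (fun t : ℤ => ((t : ZMod m))) hab
      push_cast at hcast
      rw [hwm] at hcast
      exact IsUnit.of_mul_eq_one ((b : ℤ) : ZMod m) (by linear_combination hcast)
    have hu0 : ((lucasU A B n : ℤ) : ZMod m) = 0 := by
      rw [ZMod.intCast_zmod_eq_zero_iff_dvd]
      exact Int.natAbs_dvd.mpr hwdvd
    have hUnitm : ∀ j ∈ Finset.Icc 1 (n-1), IsUnit ((lucasU A B j : ℤ) : ZMod m) :=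
      fun j hj => by
        simp only [Finset.mem_Icc] at hj
        exact unit_of_cop _ (hcop j (by omega) (by omega))
    have h2u : IsUnit (2 : ZMod m) := by
      have h := unit_of_cop 2 c2
      norm_num at h
      exact h
    have hVnu : IsUnit ((lucasV A B n : ℤ) : ZMod m) := unit_of_cop _ cvn
    have hkey := partII A B n hn hu0 hUnitm h2u hVnu
    have hMnum : w ∣ 6 * lucasV A B n *
          (∑ j ∈ Finset.Icc 1 (n-1),
            (∏ k ∈ (Finset.Icc 1 (n-1)).erase j, lucasU A B k) *
              ∏ k ∈ (Finset.Icc 1 (n-1)).erase (n-j), lucasU A B k)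
        - ((n:ℤ)^2 - 1) * (A^2 - 4*B) * (∏ j ∈ Finset.Icc 1 (n-1), lucasU A B j)^2 := by
      rw [← Int.natAbs_dvd, ← ZMod.intCast_zmod_eq_zero_iff_dvd]
      push_cast
      linear_combination hkey
    obtain ⟨s, hs⟩ := hwdvd
    obtain ⟨t, ht⟩ := hMnum
    have hGP : (6 * lucasV A B n *
          (∑ j ∈ Finset.Icc 1 (n - 1),
            lucasV A B j * ∏ k ∈ (Finset.Icc 1 (n - 1)).erase j, lucasU A B k)
        - ((n : ℤ) ^ 2 - 1) * (A ^ 2 - 4 * B) * lucasU A B n *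
            ∏ j ∈ Finset.Icc 1 (n - 1), lucasU A B j)
          * (∏ j ∈ Finset.Icc 1 (n - 1), lucasU A B j)
        = w^2 * (s * t) := by
      linear_combination (6*lucasV A B n) * hIdent + (lucasU A B n) * ht + (w*t) * hs
    have hdvd2 : w^2 ∣ (6 * lucasV A B n *
          (∑ j ∈ Finset.Icc 1 (n - 1),
            lucasV A B j * ∏ k ∈ (Finset.Icc 1 (n - 1)).erase j, lucasU A B k)
        - ((n : ℤ) ^ 2 - 1) * (A ^ 2 - 4 * B) * lucasU A B n *
            ∏ j ∈ Finset.Icc 1 (n - 1), lucasU A B j)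
          * (∏ j ∈ Finset.Icc 1 (n - 1), lucasU A B j) := ⟨s*t, hGP⟩
    exact (cP.pow_left).dvd_of_dvd_mul_right hdvd2
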